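/- Let α ∈ ℂ, β ∈ [0,1] and let T_{α,β} ∈ M₂(ℂ) have rows (α, 1+β), (1−β, α), and set S = ℂ·T_{α,β}. Then: (i) {xᴴ : x ∈ S} = S if and only if α ∈ ℝ and β = 0; (ii) I₂ ∉ S. -/
import Mathlib


open Matrix

/-- For `S = ℂ·T_{α,β}` with `T_{α,β} = !![α, 1+β; 1−β, α]`, `β ∈ [0,1]`:
(i) `S* = S` iff `α ∈ ℝ` and `β = 0`; (ii) `I₂ ∉ S`. -/
theorem stmt7 (α : ℂ) (β : ℝ) (hβ : β ∈ Set.Icc (0 : ℝ) 1) :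
    (((fun x => xᴴ) ''
        ((Submodule.span ℂ
          ({!![α, 1 + (β : ℂ); 1 - (β : ℂ), α]} : Set (Matrix (Fin 2) (Fin 2) ℂ))) :
          Set (Matrix (Fin 2) (Fin 2) ℂ)) =
        (Submodule.span ℂ
          ({!![α, 1 + (β : ℂ); 1 - (β : ℂ), α]} : Set (Matrix (Fin 2) (Fin 2) ℂ)))) ↔
      (α.im = 0 ∧ β = 0)) ∧
    (1 : Matrix (Fin 2) (Fin 2) ℂ) ∉
      Submodule.span ℂ
        ({!![α, 1 + (β : ℂ); 1 - (β : ℂ), α]} : Set (Matrix (Fin 2) (Fin 2) ℂ)) := by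
  obtain ⟨hβ0, hβ1⟩ := hβ
  set T : Matrix (Fin 2) (Fin 2) ℂ := !![α, 1 + (β : ℂ); 1 - (β : ℂ), α] with hT
  constructor
  · constructor
    · intro h
      have hTmem : T ∈ Submodule.span ℂ ({T} : Set (Matrix (Fin 2) (Fin 2) ℂ)) :=
        Submodule.mem_span_singleton_self T
      have hTH : Tᴴ ∈ (Submodule.span ℂ ({T} : Set (Matrix (Fin 2) (Fin 2) ℂ)) :
          Set (Matrix (Fin 2) (Fin 2) ℂ)) := by
        rw [← h]; exact ⟨T, hTmem, rfl⟩
      rw [SetLike.mem_coe, Submodule.mem_span_singleton] at hTH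
      obtain ⟨c, hc⟩ := hTH
      have h00 := congrFun (congrFun hc 0) 0
      have h01 := congrFun (congrFun hc 0) 1
      have h10 := congrFun (congrFun hc 1) 0
      simp [hT, Matrix.smul_apply, Matrix.conjTranspose_apply, Complex.star_def,
        map_sub, map_add, Complex.conj_ofReal] at h00 h01 h10
      have hc1 : c = 1 := by linear_combination (h01 + h10) / 2
      subst hc1
      have hb : (β : ℂ) = 0 := by linear_combination h01 / 2
      have hb' : β = 0 := by exact_mod_cast hb
      refine ⟨?_, hb'⟩
      have : (starRingEnd ℂ) α = α := by linear_combination -h00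
      exact (Complex.conj_eq_iff_im.mp this)
    · rintro ⟨him, hb⟩
      subst hb
      have hTT : Tᴴ = T := by
        ext i j
        fin_cases i <;> fin_cases j <;>
          simp [hT, Matrix.conjTranspose_apply, Complex.star_def,
            Complex.conj_eq_iff_im.mpr him]
      ext x
      simp only [Set.mem_image, SetLike.mem_coe, Submodule.mem_span_singleton]
      constructor
      · rintro ⟨y, ⟨c, rfl⟩, rfl⟩
        exact ⟨star c, by rw [Matrix.conjTranspose_smul, hTT]⟩
      · rintro ⟨c, rfl⟩
        exact ⟨star c • T, ⟨star c, rfl⟩,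
          by rw [Matrix.conjTranspose_smul, hTT, star_star]⟩
  · intro hmem
    rw [Submodule.mem_span_singleton] at hmem
    obtain ⟨c, hc⟩ := hmem
    have h00 := congrFun (congrFun hc 0) 0
    have h01 := congrFun (congrFun hc 0) 1
    simp [hT, Matrix.smul_apply, Matrix.one_apply] at h00 h01
    have hne : (1 : ℂ) + (β : ℂ) ≠ 0 := by
      have : ((1 + β : ℝ) : ℂ) ≠ 0 := Complex.ofReal_ne_zero.mpr (by linarith)
      push_cast at this; exact this
    rcases h01 with h01 | h01
    · rw [h01, zero_mul] at h00; exact one_ne_zero h00.symm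
    · exact hne h01
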